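/- With W, D as in the GeneRank model and 0 < α < 1, every eigenvalue λ of S_α = I - α D^{-1/2} W D^{-1/2} satisfies 1 - α ≤ λ ≤ 1 + α. -/

import Mathlib

theorem stmt_5 (n : ℕ) (W : Matrix (Fin n) (Fin n) ℝ) (hW : W.IsSymm)
    (hWnn : ∀ i j, 0 ≤ W i j) (α : ℝ) (hα0 : 0 < α) (hα1 : α < 1)
    (d : Fin n → ℝ) (hd : ∀ i, d i = if 0 < ∑ j, W i j then ∑ j, W i j else 1)
    (Dhalf : Matrix (Fin n) (Fin n) ℝ)
    (hDhalf : Dhalf = Matrix.diagonal fun i => (Real.sqrt (d i))⁻¹) :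
    ∀ μ ∈ spectrum ℝ ((1 : Matrix (Fin n) (Fin n) ℝ) - α • (Dhalf * W * Dhalf)),
      1 - α ≤ μ ∧ μ ≤ 1 + α := by
  intro μ hμ
  -- get an eigenvector
  rw [← AlgEquiv.spectrum_eq Matrix.toLinAlgEquiv',
    ← Module.End.hasEigenvalue_iff_mem_spectrum] at hμ
  obtain ⟨v, hv⟩ := hμ.exists_hasEigenvector
  have hveq : ((1 : Matrix (Fin n) (Fin n) ℝ) - α • (Dhalf * W * Dhalf)).mulVec v = μ • v := by
    have := hv.apply_eq_smul
    rwa [Matrix.toLinAlgEquiv'_apply] at this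
  have hvne := hv.right
  -- basic facts about d
  have hdpos : ∀ i, 0 < d i := by
    intro i
    rw [hd i]; split_ifs with h
    · exact h
    · exact one_pos
  have hsqrt : ∀ i, 0 < Real.sqrt (d i) := fun i => Real.sqrt_pos.mpr (hdpos i)
  have hsqmul : ∀ i, Real.sqrt (d i) * Real.sqrt (d i) = d i :=
    fun i => Real.mul_self_sqrt (hdpos i).le
  have hsum_le : ∀ i, (∑ j, W i j) ≤ d i := by
    intro i
    rw [hd i]; split_ifs with h
    · exact le_refl _
    · push_neg at h
      exact h.trans zero_le_one
  -- the eigen equation in coordinates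
  set lam : ℝ := (1 - μ) / α with hlam
  set u : Fin n → ℝ := fun j => (Real.sqrt (d j))⁻¹ * v j with hu
  have hMu : (Dhalf * W * Dhalf).mulVec v = lam • v := by
    have h1 : α • (Dhalf * W * Dhalf).mulVec v = (1 - μ) • v := by
      have := hveq
      rw [Matrix.sub_mulVec, Matrix.one_mulVec, Matrix.smul_mulVec] at this
      have := sub_eq_iff_eq_add.mp this
      funext i
      have h2 := congrFun this i
      simp only [Pi.smul_apply, Pi.sub_apply, Pi.add_apply, smul_eq_mul] at h2 ⊢
      linarith
    funext i
    have h2 := congrFun h1 i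
    simp only [Pi.smul_apply, smul_eq_mul] at h2 ⊢
    rw [hlam]
    field_simp
    linarith
  -- entrywise: ∑ j, W i j * u j = lam * (d i * u i)
  have key : ∀ i, (∑ j, W i j * u j) = lam * (d i * u i) := by
    intro i
    have h2 := congrFun hMu i
    rw [hDhalf] at h2
    simp only [Matrix.mulVec, dotProduct, Matrix.mul_diagonal, Matrix.diagonal_mul,
      Pi.smul_apply, smul_eq_mul] at h2
    -- h2 : ∑ j, (√(d i))⁻¹ * W i j * (√(d j))⁻¹ * v j = lam * v i
    have h3 : (∑ j, W i j * u j) = Real.sqrt (d i) * (lam * v i) := by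
      rw [← h2, Finset.mul_sum]
      refine Finset.sum_congr rfl fun j _ => ?_
      rw [hu]
      field_simp [(hsqrt i).ne', (hsqrt j).ne']
    rw [h3, hu, ← hsqmul i]
    have hne := (hsqrt i).ne'
    field_simp
    rw [Real.sqrt_sq (hsqrt i).le]
  -- pick a coordinate maximizing |u|
  obtain ⟨j0, hj0⟩ : ∃ j, v j ≠ 0 := Function.ne_iff.mp hvne
  have hune : u j0 ≠ 0 := mul_ne_zero (inv_ne_zero (hsqrt j0).ne') hj0
  obtain ⟨i, -, hi⟩ := Finset.exists_max_image Finset.univ (fun j => |u j|)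
    ⟨j0, Finset.mem_univ j0⟩
  have hupos : 0 < |u i| := lt_of_lt_of_le (abs_pos.mpr hune) (hi j0 (Finset.mem_univ _))
  have h1 : |lam * (d i * u i)| ≤ ∑ j, W i j * |u j| := by
    rw [← key i]
    calc |∑ j, W i j * u j| ≤ ∑ j, |W i j * u j| := Finset.abs_sum_le_sum_abs _ _
      _ = ∑ j, W i j * |u j| := by
          refine Finset.sum_congr rfl fun j _ => ?_
          rw [abs_mul, abs_of_nonneg (hWnn i j)]
  have h2 : (∑ j, W i j * |u j|) ≤ (∑ j, W i j) * |u i| := by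
    rw [Finset.sum_mul]
    exact Finset.sum_le_sum fun j _ =>
      mul_le_mul_of_nonneg_left (hi j (Finset.mem_univ j)) (hWnn i j)
  have h3 : (∑ j, W i j) * |u i| ≤ d i * |u i| :=
    mul_le_mul_of_nonneg_right (hsum_le i) (abs_nonneg _)
  have hbound : |lam| * (d i * |u i|) ≤ 1 * (d i * |u i|) := by
    have : |lam * (d i * u i)| = |lam| * (d i * |u i|) := by
      rw [abs_mul, abs_mul, abs_of_pos (hdpos i)]
    rw [← this, one_mul]
    exact h1.trans (h2.trans h3)
  have hdiu : 0 < d i * |u i| := mul_pos (hdpos i) hupos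
  have hlam1 : |lam| ≤ 1 := le_of_mul_le_mul_right hbound hdiu
  have habs : |1 - μ| ≤ α := by
    rw [hlam, abs_div, abs_of_pos hα0, div_le_one hα0] at hlam1
    exact hlam1
  obtain ⟨hl, hr⟩ := abs_le.mp habs
  constructor <;> linarith
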